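/- Let A be a finite idempotent algebra and h a ternary term operation of A. Then there exists a ternary term operation h′ of A such that h′(h′(x,y,y), y, y) = h′(x,y,y) for all x,y ∈ A, and such that for all a,b ∈ A and every congruence θ of Sg{a,b}: if h(a,b,b) θ a and h(b,b,a) θ a, then h′(a,b,b) θ a and h′(b,b,a) θ a. -/
import Mathlib


namespace UA

/-- Terms over a signature `(ι, ar)` with `n` variables. -/
inductive Term (ι : Type) (ar : ι → ℕ) (n : ℕ) : Type where
  | var : Fin n → Term ι ar n
  | app : (i : ι) → (Fin (ar i) → Term ι ar n) → Term ι ar n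

/-- Evaluation of a term in an algebra with operations `ops`. -/
def Term.eval {ι : Type} {ar : ι → ℕ} {A : Type} (ops : ∀ i : ι, (Fin (ar i) → A) → A)
    {n : ℕ} : Term ι ar n → (Fin n → A) → A
  | .var j, x => x j
  | .app i ts, x => ops i fun k => Term.eval ops (ts k) x

variable {ι : Type} {ar : ι → ℕ} {A : Type}

/-- An algebra is idempotent if every basic operation is. -/
def Idempotent (ops : ∀ i : ι, (Fin (ar i) → A) → A) : Prop :=
  ∀ (i : ι) (x : A), ops i (fun _ => x) = x

/-- A subuniverse: a subset closed under all basic operations. -/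
def IsSubuniverse (ops : ∀ i : ι, (Fin (ar i) → A) → A) (S : Set A) : Prop :=
  ∀ (i : ι) (xs : Fin (ar i) → A), (∀ k, xs k ∈ S) → ops i xs ∈ S

/-- The subuniverse generated by `X`. -/
def Sg (ops : ∀ i : ι, (Fin (ar i) → A) → A) (X : Set A) : Set A :=
  ⋂₀ {S | IsSubuniverse ops S ∧ X ⊆ S}

/-- A tolerance: a reflexive symmetric compatible binary relation. -/
def IsTolerance (ops : ∀ i : ι, (Fin (ar i) → A) → A) (τ : A → A → Prop) : Prop :=
  (∀ x, τ x x) ∧ (∀ x y, τ x y → τ y x) ∧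
  ∀ (i : ι) (xs ys : Fin (ar i) → A), (∀ k, τ (xs k) (ys k)) → τ (ops i xs) (ops i ys)

/-- A congruence: a compatible equivalence relation. -/
def IsCongruence (ops : ∀ i : ι, (Fin (ar i) → A) → A) (θ : A → A → Prop) : Prop :=
  Equivalence θ ∧
  ∀ (i : ι) (xs ys : Fin (ar i) → A), (∀ k, θ (xs k) (ys k)) → θ (ops i xs) (ops i ys)

/-- A congruence of the subalgebra with universe `B`, viewed as a partial
equivalence relation on the big algebra whose domain is exactly `B` and which is
compatible with all operations. -/
def IsCongruenceOn (ops : ∀ i : ι, (Fin (ar i) → A) → A) (B : Set A)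
    (θ : A → A → Prop) : Prop :=
  (∀ x y, θ x y → x ∈ B ∧ y ∈ B) ∧
  (∀ x ∈ B, θ x x) ∧
  (∀ x y, θ x y → θ y x) ∧
  (∀ x y z, θ x y → θ y z → θ x z) ∧
  ∀ (i : ι) (xs ys : Fin (ar i) → A), (∀ k, θ (xs k) (ys k)) → θ (ops i xs) (ops i ys)

/-- `f` is a binary term operation of the algebra. -/
def IsTermOp2 (ops : ∀ i : ι, (Fin (ar i) → A) → A) (f : A → A → A) : Prop :=
  ∃ t : Term ι ar 2, ∀ x y, f x y = t.eval ops ![x, y]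

/-- `g` is a ternary term operation of the algebra. -/
def IsTermOp3 (ops : ∀ i : ι, (Fin (ar i) → A) → A) (g : A → A → A → A) : Prop :=
  ∃ t : Term ι ar 3, ∀ x y z, g x y z = t.eval ops ![x, y, z]

/-- Connectivity of `a` and `b` in the hypergraph `H(A)` whose hyperedges are the
nonempty proper subuniverses: a chain of hyperedges with consecutive ones
intersecting, the first containing `a`, the last containing `b`. -/
def HConnected (ops : ∀ i : ι, (Fin (ar i) → A) → A) (a b : A) : Prop :=
  ∃ L : List (Set A),
    (∀ S ∈ L, IsSubuniverse ops S ∧ S.Nonempty ∧ S ≠ Set.univ) ∧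
    L.Chain' (fun S T => (S ∩ T).Nonempty) ∧
    ∃ h : L ≠ [], a ∈ L.head h ∧ b ∈ L.getLast h


/-- Substitution of terms into a term. -/
def Term.subst {n m : ℕ} : Term ι ar n → (Fin n → Term ι ar m) → Term ι ar m
  | .var j, σ => σ j
  | .app i ts, σ => .app i fun k => (ts k).subst σ

theorem Term.eval_subst (ops : ∀ i : ι, (Fin (ar i) → A) → A) {n m : ℕ}
    (t : Term ι ar n) (σ : Fin n → Term ι ar m) (x : Fin m → A) :
    (t.subst σ).eval ops x = t.eval ops fun j => (σ j).eval ops x := by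
  induction t with
  | var j => rfl
  | app i ts ih => simp only [Term.subst, Term.eval]; exact congrArg _ (funext fun k => ih k)

theorem eval_compat (ops : ∀ i : ι, (Fin (ar i) → A) → A) (θ : A → A → Prop)
    (hcomp : ∀ (i : ι) (xs ys : Fin (ar i) → A), (∀ k, θ (xs k) (ys k)) → θ (ops i xs) (ops i ys))
    {n : ℕ} (t : Term ι ar n) (xs ys : Fin n → A) (hxy : ∀ j, θ (xs j) (ys j)) :
    θ (t.eval ops xs) (t.eval ops ys) := by
  induction t with
  | var j => exact hxy j
  | app i ts ih => exact hcomp i _ _ fun k => ih k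

/-- On a finite set there is a uniform `N > 0` such that `f^[N]` is idempotent for all `f`. -/
theorem exists_idem_iter (A : Type) [Fintype A] [Nonempty A] :
    ∃ N : ℕ, 0 < N ∧ ∀ f : A → A, ∀ x, f^[N] (f^[N] x) = f^[N] x := by
  classical
  set M := Fintype.card (A → A) with hM
  refine ⟨(Nat.factorial M), Nat.factorial_pos M, fun f x => ?_⟩
  -- pigeonhole: two equal iterates among f^[0], ..., f^[M]
  obtain ⟨i, j, hne, hij⟩ := Fintype.exists_ne_map_eq_of_card_lt
    (fun k : Fin (M + 1) => f^[(k : ℕ)]) (by simp [hM])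
  -- wlog i < j
  have hlt : ∃ i' j' : ℕ, i' < j' ∧ j' ≤ M ∧ f^[i'] = f^[j'] := by
    rcases lt_trichotomy (i : ℕ) (j : ℕ) with hl | he | hl
    · exact ⟨i, j, hl, Nat.lt_succ_iff.mp j.isLt, hij⟩
    · exact absurd (Fin.ext he) hne
    · exact ⟨j, i, hl, Nat.lt_succ_iff.mp i.isLt, hij.symm⟩
  obtain ⟨i', j', hlt, hjM, heq⟩ := hlt
  set p := j' - i' with hp
  have hpp : 0 < p := Nat.sub_pos_of_lt hlt
  have hij' : i' + p = j' := by omega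
  have key : ∀ n : ℕ, f^[i' + n * p] = f^[i'] := by
    intro n
    induction n with
    | zero => simp
    | succ n ihn =>
      have : i' + (n + 1) * p = p + (i' + n * p) := by ring
      rw [this, Function.iterate_add, ihn, ← Function.iterate_add, Nat.add_comm, hij', heq]
  have key2 : ∀ m n : ℕ, f^[i' + m + n * p] = f^[i' + m] := by
    intro m n
    have h1 : i' + m + n * p = m + (i' + n * p) := by ring
    rw [h1, Function.iterate_add, key, ← Function.iterate_add, Nat.add_comm]
  -- now N = M! works
  have hiN : i' ≤ (Nat.factorial M) := le_trans (by omega) (le_trans hjM (Nat.self_le_factorial M))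
  have hpN : p ∣ (Nat.factorial M) := Nat.dvd_factorial hpp (by omega)
  obtain ⟨q, hq⟩ := hpN
  obtain ⟨r, hr⟩ := Nat.exists_eq_add_of_le hiN
  have h2N : f^[(Nat.factorial M) + (Nat.factorial M)] = f^[(Nat.factorial M)] := by
    have : (Nat.factorial M) + (Nat.factorial M) = i' + r + q * p := by rw [← hr, hq]; ring
    rw [this, key2, ← hr]
  calc f^[(Nat.factorial M)] (f^[(Nat.factorial M)] x) = f^[(Nat.factorial M) + (Nat.factorial M)] x := (Function.iterate_add_apply f _ _ x).symm
    _ = f^[(Nat.factorial M)] x := by rw [h2N]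

/-- any ternary term operation can be improved to one satisfying
`h'(h'(x,y,y), y, y) = h'(x,y,y)` while keeping its Maltsev-style behaviour
modulo any congruence of any 2-generated subalgebra. -/
theorem stmt_8 {ι : Type} {ar : ι → ℕ} {A : Type} [Fintype A] [Nonempty A]
    (ops : ∀ i : ι, (Fin (ar i) → A) → A)
    (hidem : Idempotent ops)
    (h : A → A → A → A) (hh : IsTermOp3 ops h) :
    ∃ h' : A → A → A → A, IsTermOp3 ops h' ∧
      (∀ x y : A, h' (h' x y y) y y = h' x y y) ∧
      ∀ (a b : A) (θ : A → A → Prop),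
        IsCongruenceOn ops (Sg ops ({a, b} : Set A)) θ →
        θ (h a b b) a → θ (h b b a) a →
        θ (h' a b b) a ∧ θ (h' b b a) a := by
  classical
  obtain ⟨N, hNpos, hN⟩ := exists_idem_iter A
  obtain ⟨t, ht⟩ := hh
  obtain ⟨K, hK⟩ : ∃ K, N = K + 1 := ⟨N - 1, by omega⟩
  -- h' x y z = (fun u => h u y y)^[K] (h x y z)
  set h' : A → A → A → A := fun x y z => (fun u => h u y y)^[K] (h x y z) with hh'
  -- the corresponding terms
  let g : ℕ → Term ι ar 3 := fun k => Nat.rec t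
    (fun _ gk => t.subst ![gk, Term.var 1, Term.var 1]) k
  have hg : ∀ (k : ℕ) (x y z : A),
      (g k).eval ops ![x, y, z] = (fun u => h u y y)^[k] (h x y z) := by
    intro k
    induction k with
    | zero => intro x y z; exact (ht x y z).symm
    | succ k ih =>
      intro x y z
      have : (g (k + 1)).eval ops ![x, y, z]
          = t.eval ops ![(g k).eval ops ![x, y, z], y, y] := by
        show (t.subst ![g k, Term.var 1, Term.var 1]).eval ops ![x, y, z] = _
        rw [Term.eval_subst]
        congr 1
        funext j
        fin_cases j <;> rfl
      rw [this, ih, Function.iterate_succ_apply', ← ht]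
  have hform : ∀ x y : A, h' x y y = (fun u => h u y y)^[N] x := by
    intro x y
    show (fun u => h u y y)^[K] (h x y y) = _
    rw [hK, Function.iterate_succ_apply]
  refine ⟨h', ⟨g K, fun x y z => (hg K x y z).symm⟩, ?_, ?_⟩
  · intro x y
    rw [hform (h' x y y) y, hform x y]
    exact hN _ x
  · intro a b θ hθ h1 h2
    obtain ⟨hdom, hrefl, hsymm, htrans, hcomp⟩ := hθ
    have haB : a ∈ Sg ops ({a, b} : Set A) := fun S hS => hS.2 (Or.inl rfl)
    have hbB : b ∈ Sg ops ({a, b} : Set A) := fun S hS => hS.2 (Or.inr rfl)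
    have hθaa : θ a a := hrefl a haB
    have hθbb : θ b b := hrefl b hbB
    set f : A → A := fun u => h u b b with hf
    have fcompat : ∀ u v, θ u v → θ (f u) (f v) := by
      intro u v huv
      show θ (h u b b) (h v b b)
      rw [ht u b b, ht v b b]
      refine eval_compat ops θ hcomp t _ _ fun j => ?_
      fin_cases j <;> simpa
    have fiter : ∀ (k : ℕ) (u v : A), θ u v → θ (f^[k] u) (f^[k] v) := by
      intro k
      induction k with
      | zero => intro u v huv; exact huv
      | succ k ih =>
        intro u v huv
        rw [Function.iterate_succ_apply', Function.iterate_succ_apply']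
        exact fcompat _ _ (ih u v huv)
    have hfa : ∀ k : ℕ, θ (f^[k] a) a := by
      intro k
      induction k with
      | zero => exact hθaa
      | succ k ih =>
        rw [Function.iterate_succ_apply']
        exact htrans _ _ _ (fcompat _ _ ih) h1
    constructor
    · show θ (f^[K] (h a b b)) a
      exact htrans _ _ _ (fiter K _ _ h1) (hfa K)
    · show θ (f^[K] (h b b a)) a
      exact htrans _ _ _ (fiter K _ _ h2) (hfa K)

end UA
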